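/- Let X ∈ ℝ^{m×n} be nonnegative with Z̄ satisfying max(0, Z̄) = X, and let Θ̄ be any matrix. Then ‖X − Z̄ + min(0, Θ̄)‖_F² ≤ ‖Z̄ − Θ̄‖_F². -/
import Mathlib

open Finset

theorem latent_min_bound {m n : ℕ} (X Z Θ : Matrix (Fin m) (Fin n) ℝ)
    (hX : ∀ i j, 0 ≤ X i j)
    (hZ : ∀ i j, max 0 (Z i j) = X i j) :
    ∑ i, ∑ j, (X i j - Z i j + min 0 (Θ i j))^2 ≤ ∑ i, ∑ j, (Z i j - Θ i j)^2 := by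
  refine Finset.sum_le_sum fun i _ => Finset.sum_le_sum fun j _ => ?_
  have h := hZ i j
  rcases le_total 0 (Z i j) with hz | hz <;>
  rcases le_total 0 (Θ i j) with ht | ht <;>
  simp [max_eq_right, max_eq_left, min_eq_left, min_eq_right, hz, ht] at h ⊢ <;>
  nlinarith [sq_nonneg (Z i j - Θ i j), sq_nonneg (Z i j), sq_nonneg (Θ i j)]
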